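/- Let C_n be the cycle on n ≥ 3 vertices. Then α_{0-reg}(C_n) = ⌊n/2⌋; for k = 1, α_{1-reg}(C_n) = 2a if n = 3a or n = 3a+1, and α_{1-reg}(C_n) = 2a+1 if n = 3a+2 (equivalently, α_{1-reg}(C_n) = n − ⌈n/3⌉); and α_{k-reg}(C_n) = n for every k ≥ 2. -/

import Mathlib

open SimpleGraph

/-- The degree of a vertex `v` in `G`: the number of neighbors of `v`. -/
noncomputable def degN {V : Type*} (G : SimpleGraph V) (v : V) : ℕ := {u | G.Adj v u}.ncard

/-- A set of vertices is `k`-independent if the induced subgraph has maximum degree at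
most `k`, i.e. every vertex of the set has at most `k` neighbors inside the set. -/
def IsKIndepSet {V : Type*} (G : SimpleGraph V) (k : ℕ) (S : Set V) : Prop :=
  ∀ v ∈ S, {u | u ∈ S ∧ G.Adj v u}.ncard ≤ k

/-- A set of vertices is regular if all its vertices have the same degree in `G`. -/
def IsRegularSet {V : Type*} (G : SimpleGraph V) (S : Set V) : Prop :=
  ∀ u ∈ S, ∀ v ∈ S, degN G u = degN G v

/-- The regular `k`-independence number `α_{k-reg}(G)`: the maximum cardinality of a set
of vertices that is both `k`-independent and regular. -/
noncomputable def regKIndepNum {V : Type*} (G : SimpleGraph V) (k : ℕ) : ℕ :=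
  sSup {m : ℕ | ∃ S : Set V, S.ncard = m ∧ IsKIndepSet G k S ∧ IsRegularSet G S}

lemma sum2 (n : ℕ) : ∑ i ∈ Finset.range n, (if i % 2 = 1 then 1 else 0) = n / 2 := by
  induction n with
  | zero => simp
  | succ n ih => rw [Finset.sum_range_succ, ih]; split <;> omega

lemma sum3 (n : ℕ) : ∑ i ∈ Finset.range n, (if i % 3 = 2 then 0 else 1) = n - n / 3 := by
  induction n with
  | zero => simp
  | succ n ih => rw [Finset.sum_range_succ, ih]; split <;> omega

lemma ncard_val (n : ℕ) (p : ℕ → Prop) [DecidablePred p] :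
    Set.ncard {v : Fin n | p v.val} = ∑ i ∈ Finset.range n, (if p i then 1 else 0) := by
  rw [Set.ncard_eq_toFinset_card', Set.toFinset_setOf, Finset.card_filter]
  exact Fin.sum_univ_eq_sum_range (fun i => if p i then 1 else 0) n

lemma adj_iff {m : ℕ} (v u : Fin (m+3)) :
    (cycleGraph (m+3)).Adj v u ↔ u = v - 1 ∨ u = v + 1 := by
  have := cycleGraph_neighborSet (n := m+1) (v := v)
  rw [Set.ext_iff] at this
  simpa [SimpleGraph.mem_neighborSet] using this u

lemma cycle_regular (m : ℕ) (S : Set (Fin (m+3))) : IsRegularSet (cycleGraph (m+3)) S := by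
  have h : ∀ w : Fin (m+3), degN (cycleGraph (m+3)) w = 2 := by
    intro w
    have h2 : degN (cycleGraph (m+3)) w = (cycleGraph (m+3)).degree w := by
      rw [degN, SimpleGraph.degree, ← Set.ncard_coe_finset]
      congr 1
      ext u
      simp [SimpleGraph.mem_neighborFinset, SimpleGraph.mem_neighborSet]
    rw [h2, cycleGraph_degree_three_le]
  intro u _ v _
  rw [h u, h v]

lemma fin_two_ne_zero (m : ℕ) : (2 : Fin (m+3)) ≠ 0 := by
  intro h
  have : ((2 : Fin (m+3))).val = 0 := by rw [h]; rfl
  have h2 : ((2 : Fin (m+3))).val = 2 % (m+3) := rfl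
  rw [Nat.mod_eq_of_lt (by omega)] at h2
  omega

lemma card_ite_mem (m : ℕ) (T : Finset (Fin (m+3))) :
    ∑ v : Fin (m+3), (if v ∈ T then 1 else 0) = T.card := by
  rw [Finset.sum_ite_mem, Finset.univ_inter, Finset.card_eq_sum_ones]

lemma shift_sum (m : ℕ) (T : Finset (Fin (m+3))) (c : Fin (m+3)) :
    ∑ v : Fin (m+3), (if v + c ∈ T then 1 else 0) = T.card := by
  rw [← card_ite_mem m T]
  exact Fintype.sum_equiv (Equiv.addRight c) _ _ (fun v => rfl)

lemma ub0 (m : ℕ) (S : Set (Fin (m+3))) (hS : IsKIndepSet (cycleGraph (m+3)) 0 S) :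
    S.ncard ≤ (m+3) / 2 := by
  classical
  set T := S.toFinset with hT
  have key : ∀ v : Fin (m+3), v ∈ T → v + 1 ∉ T := by
    intro v hv hv1
    have h1 : v + 1 ∈ {u | u ∈ S ∧ (cycleGraph (m+3)).Adj v u} :=
      ⟨by simpa [hT, Set.mem_toFinset] using hv1, by rw [adj_iff]; right; rfl⟩
    have h2 := hS v (by simpa [hT, Set.mem_toFinset] using hv)
    have hpos : 0 < {u | u ∈ S ∧ (cycleGraph (m+3)).Adj v u}.ncard := by
      rw [Set.ncard_pos (Set.toFinite _)]
      exact ⟨_, h1⟩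
    omega
  have hsum : ∑ v : Fin (m+3), ((if v ∈ T then 1 else 0) + (if v + 1 ∈ T then 1 else 0))
      ≤ ∑ _v : Fin (m+3), 1 := by
    refine Finset.sum_le_sum fun v _ => ?_
    by_cases h : v ∈ T
    · simp [h, key v h]
    · simp [h]; split <;> omega
  rw [Finset.sum_add_distrib, card_ite_mem, shift_sum] at hsum
  simp only [Finset.sum_const, Finset.card_univ, Fintype.card_fin, smul_eq_mul, mul_one] at hsum
  rw [Set.ncard_eq_toFinset_card', ← hT]
  omega

lemma ub1 (m : ℕ) (S : Set (Fin (m+3))) (hS : IsKIndepSet (cycleGraph (m+3)) 1 S) :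
    S.ncard ≤ (m+3) - ((m+3) + 2) / 3 := by
  classical
  set T := S.toFinset with hT
  have key : ∀ v : Fin (m+3), v ∈ T → v + 1 ∈ T → v + 2 ∉ T := by
    intro v hv hv1 hv2
    have hsub : ({v, v + 2} : Set (Fin (m+3))) ⊆
        {u | u ∈ S ∧ (cycleGraph (m+3)).Adj (v+1) u} := by
      rintro u (rfl | rfl)
      · exact ⟨by simpa [hT, Set.mem_toFinset] using hv,
          by rw [adj_iff]; left; rw [add_sub_cancel_right]⟩
      · exact ⟨by simpa [hT, Set.mem_toFinset] using hv2,
          by rw [adj_iff]; right; rw [add_assoc]; norm_num; exact Fin.ext (by show 2 % (m+3) = (1 % (m+3) + 1 % (m+3)) % (m+3); rw [Nat.mod_eq_of_lt (by omega : 1 < m+3)])⟩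
    have hne : v ≠ v + 2 := by
      intro h
      exact fin_two_ne_zero m (left_eq_add.mp h)
    have h2 : 2 ≤ {u | u ∈ S ∧ (cycleGraph (m+3)).Adj (v+1) u}.ncard := by
      exact le_trans (le_of_eq (Set.ncard_pair hne).symm)
        (Set.ncard_le_ncard hsub (Set.toFinite _))
    have h3 := hS (v+1) (by simpa [hT, Set.mem_toFinset] using hv1)
    omega
  have hsum : ∑ v : Fin (m+3), ((if v ∈ T then 1 else 0) + ((if v + 1 ∈ T then 1 else 0)
      + (if v + 2 ∈ T then 1 else 0))) ≤ ∑ _v : Fin (m+3), 2 := by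
    refine Finset.sum_le_sum fun v _ => ?_
    by_cases h : v ∈ T
    · by_cases h1 : v + 1 ∈ T
      · simp [h, h1, key v h h1]
      · simp [h, h1]; split <;> omega
    · simp [h]; split <;> split <;> omega
  rw [Finset.sum_add_distrib, Finset.sum_add_distrib, card_ite_mem, shift_sum, shift_sum] at hsum
  simp only [Finset.sum_const, Finset.card_univ, Fintype.card_fin, smul_eq_mul] at hsum
  rw [Set.ncard_eq_toFinset_card', ← hT]
  omega

lemma lb_univ (m k : ℕ) (hk : 2 ≤ k) :
    IsKIndepSet (cycleGraph (m+3)) k (Set.univ) := by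
  intro v _
  have hsub : {u | u ∈ (Set.univ : Set (Fin (m+3))) ∧ (cycleGraph (m+3)).Adj v u}
      ⊆ {v - 1, v + 1} := by
    rintro u ⟨_, hadj⟩
    rw [adj_iff] at hadj
    simpa using hadj
  refine le_trans (le_trans (Set.ncard_le_ncard hsub (Set.toFinite _)) ?_) hk
  exact le_trans (Set.ncard_insert_le _ _) (by simp)

lemma card0 (m : ℕ) : {v : Fin (m+3) | v.val % 2 = 1}.ncard = (m+3) / 2 := by
  rw [ncard_val (m+3) (fun i => i % 2 = 1)]
  exact sum2 (m+3)

lemma lb0 (m : ℕ) : IsKIndepSet (cycleGraph (m+3)) 0 {v : Fin (m+3) | v.val % 2 = 1} := by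
  intro v hv
  have hv' : v.val % 2 = 1 := hv
  have hempty : {u | u ∈ {w : Fin (m+3) | w.val % 2 = 1} ∧ (cycleGraph (m+3)).Adj v u} = ∅ := by
    ext u
    simp only [Set.mem_setOf_eq, Set.mem_empty_iff_false, iff_false, not_and]
    intro hu hadj
    rw [adj_iff] at hadj
    rcases hadj with rfl | rfl
    · rcases eq_or_ne v 0 with rfl | hz
      · simp at hv'
      · have h1 : ((v - 1 : Fin (m+3))).val = v.val - 1 := by
          rw [Fin.coe_sub_one, if_neg hz]
        have hz' : v.val ≠ 0 := fun h => hz (Fin.ext h)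
        rw [h1] at hu
        omega
    · rcases eq_or_ne v (Fin.last (m+2)) with rfl | hl
      · have h1 : ((Fin.last (m+2) + 1 : Fin (m+3))).val = 0 := by
          rw [Fin.val_add_one, if_pos rfl]
        rw [h1] at hu
        omega
      · have h1 : ((v + 1 : Fin (m+3))).val = v.val + 1 := by
          rw [Fin.val_add_one, if_neg hl]
        rw [h1] at hu
        omega
  rw [hempty]
  simp

lemma card1 (m : ℕ) :
    {v : Fin (m+3) | v.val % 3 ≠ 2 ∧ v.val + 1 < m+3}.ncard = (m+3) - ((m+3) + 2) / 3 := by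
  rw [ncard_val (m+3) (fun i => i % 3 ≠ 2 ∧ i + 1 < m+3)]
  rw [show m + 3 = (m+2) + 1 from rfl, Finset.sum_range_succ]
  have h1 : (if (m+2) % 3 ≠ 2 ∧ (m+2) + 1 < m+2+1 then 1 else 0) = 0 := by
    simp
  rw [h1, add_zero]
  have h2 : ∑ i ∈ Finset.range (m+2), (if i % 3 ≠ 2 ∧ i + 1 < m+2+1 then 1 else 0)
      = ∑ i ∈ Finset.range (m+2), (if i % 3 = 2 then 0 else 1) := by
    refine Finset.sum_congr rfl fun i hi => ?_
    rw [Finset.mem_range] at hi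
    split_ifs <;> omega
  rw [h2, sum3]
  omega

lemma lb1 (m : ℕ) : IsKIndepSet (cycleGraph (m+3)) 1
    {v : Fin (m+3) | v.val % 3 ≠ 2 ∧ v.val + 1 < m+3} := by
  intro v hv
  obtain ⟨hv3, hvlt⟩ := hv
  have h3 : v.val % 3 = 0 ∨ v.val % 3 = 1 := by omega
  rcases h3 with h0 | h1
  · have hsub : {u | u ∈ {w : Fin (m+3) | w.val % 3 ≠ 2 ∧ w.val + 1 < m+3}
        ∧ (cycleGraph (m+3)).Adj v u} ⊆ {v + 1} := by
      rintro u ⟨hu, hadj⟩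
      rw [adj_iff] at hadj
      rcases hadj with rfl | rfl
      · exfalso
        obtain ⟨hu3, hult⟩ := hu
        rcases eq_or_ne v 0 with rfl | hz
        · have h1 : ((0 - 1 : Fin (m+3))).val = m + 2 := by
            rw [Fin.coe_sub_one, if_pos rfl]
          rw [h1] at hult
          omega
        · have h1 : ((v - 1 : Fin (m+3))).val = v.val - 1 := by
            rw [Fin.coe_sub_one, if_neg hz]
          have hz' : v.val ≠ 0 := fun h => hz (Fin.ext h)
          rw [h1] at hu3
          omega
      · rfl
    exact le_trans (Set.ncard_le_ncard hsub (Set.toFinite _)) (by simp)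
  · have hsub : {u | u ∈ {w : Fin (m+3) | w.val % 3 ≠ 2 ∧ w.val + 1 < m+3}
        ∧ (cycleGraph (m+3)).Adj v u} ⊆ {v - 1} := by
      rintro u ⟨hu, hadj⟩
      rw [adj_iff] at hadj
      rcases hadj with rfl | rfl
      · rfl
      · exfalso
        obtain ⟨hu3, hult⟩ := hu
        have hl : v ≠ Fin.last (m+2) := by
          intro h
          rw [h] at hvlt
          simp [Fin.last] at hvlt
        have h2 : ((v + 1 : Fin (m+3))).val = v.val + 1 := by
          rw [Fin.val_add_one, if_neg hl]
        rw [h2] at hu3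
        omega
    exact le_trans (Set.ncard_le_ncard hsub (Set.toFinite _)) (by simp)

lemma sSup_helper {A : Set ℕ} {a : ℕ} (h1 : a ∈ A) (h2 : ∀ b ∈ A, b ≤ a) : sSup A = a :=
  IsGreatest.csSup_eq ⟨h1, h2⟩


/-- Regular `k`-independence numbers of the cycle `C_n` for `n ≥ 3`:
`α_{0-reg}(C_n) = ⌊n/2⌋`, `α_{1-reg}(C_n) = n - ⌈n/3⌉`, and
`α_{k-reg}(C_n) = n` for all `k ≥ 2`. -/
theorem stmt_4 (n : ℕ) (hn : 3 ≤ n) :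
    regKIndepNum (cycleGraph n) 0 = n / 2 ∧
    regKIndepNum (cycleGraph n) 1 = n - (n + 2) / 3 ∧
    ∀ k : ℕ, 2 ≤ k → regKIndepNum (cycleGraph n) k = n := by
  obtain ⟨m, rfl⟩ : ∃ m, n = m + 3 := ⟨n - 3, by omega⟩
  unfold regKIndepNum
  refine ⟨?_, ?_, ?_⟩
  · apply sSup_helper
    · exact ⟨_, card0 m, lb0 m, cycle_regular m _⟩
    · rintro b ⟨S, rfl, hind, -⟩
      exact ub0 m S hind
  · apply sSup_helper
    · exact ⟨_, card1 m, lb1 m, cycle_regular m _⟩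
    · rintro b ⟨S, rfl, hind, -⟩
      exact ub1 m S hind
  · intro k hk
    apply sSup_helper
    · refine ⟨Set.univ, ?_, lb_univ m k hk, cycle_regular m _⟩
      rw [Set.ncard_univ, Nat.card_eq_fintype_card, Fintype.card_fin]
    · rintro b ⟨S, rfl, -, -⟩
      calc S.ncard ≤ (Set.univ : Set (Fin (m+3))).ncard :=
            Set.ncard_le_ncard (Set.subset_univ S) Set.finite_univ
        _ = m + 3 := by rw [Set.ncard_univ, Nat.card_eq_fintype_card, Fintype.card_fin]
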